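/- Let X be diagonalizable in M_n(ℂ) and suppose X = R N R⁻¹ = R' N' R'⁻¹ where N, N' are normal matrices and R, R' are positive definite Hermitian matrices. Then R⁻¹ N R = R'⁻¹ N' R'. In other words, the map X ↦ R⁻¹ N R on diagonalizable matrices is well defined independently of the chosen decomposition. -/

import Mathlib

open scoped Matrix.Norms.L2Operator
open NormedSpace

section FP

variable {A : Type*} [NormedRing A] [NormedAlgebra ℂ A] [CompleteSpace A]

private lemma fp_exp {M N N' : A} (h : M * N = N' * M) (w : ℂ) :
    M * exp (w • N) = exp (w • N') * M := by
  have hp : ∀ k : ℕ, M * N ^ k = N' ^ k * M := by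
    intro k
    induction k with
    | zero => simp
    | succ k ih =>
      rw [pow_succ, ← mul_assoc, ih, mul_assoc, h, ← mul_assoc, ← pow_succ]
  simp only [exp_eq_tsum ℂ]
  rw [← Summable.tsum_mul_left M (expSeries_summable' (𝕂 := ℂ) (w • N)),
      ← Summable.tsum_mul_right M (expSeries_summable' (𝕂 := ℂ) (w • N'))]
  congr 1
  funext k
  simp only [smul_pow, mul_smul_comm, smul_mul_assoc, hp]

private noncomputable def ratAlgFP : NormedAlgebra ℚ A := NormedAlgebra.restrictScalars ℚ ℂ A

attribute [local instance] ratAlgFP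

private lemma exp_mul_exp_neg (a : A) : exp a * exp (-a) = 1 := by
  rw [← exp_add_of_commute (Commute.neg_right (Commute.refl a)), add_neg_cancel, exp_zero]

private lemma exp_neg_mul_exp (a : A) : exp (-a) * exp a = 1 := by
  rw [← exp_add_of_commute (Commute.neg_left (Commute.refl a)), neg_add_cancel, exp_zero]

variable [StarRing A] [CStarRing A] [StarModule ℂ A]

private lemma exp_skew_unitary {a : A} (ha : star a = -a) : exp a ∈ unitary A := by
  constructor
  · rw [star_exp, ha, exp_neg_mul_exp]
  · rw [star_exp, ha, exp_mul_exp_neg]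

/-- Fuglede–Putnam for matrices (via an abstract C*-algebra). -/
lemma fuglede_putnam (M N N' : A)
    (hN : N * star N = star N * N) (hN' : N' * star N' = star N' * N')
    (h : M * N = N' * M) : M * star N = star N' * M := by
  rcases subsingleton_or_nontrivial A with hs | hs
  · exact Subsingleton.elim _ _
  have hexp : ∀ w : ℂ, M * exp (w • N) = exp (w • N') * M := fp_exp h
  set G : ℂ → A := fun z => exp (z • (-star N')) * M * exp (z • star N) with hG
  have hdiff : Differentiable ℂ G := by
    intro z
    exact (((hasDerivAt_exp_smul_const (𝕂 := ℂ) (-star N') z).differentiableAt.mul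
      (differentiableAt_const M)).mul
      (hasDerivAt_exp_smul_const (𝕂 := ℂ) (star N) z).differentiableAt)
  have hbnd : ∀ z : ℂ, ‖G z‖ ≤ ‖M‖ := by
    intro z
    set w : ℂ := starRingEnd ℂ z with hw
    have hMrw : M = exp (w • N') * M * exp (-(w • N)) := by
      have := hexp w
      calc M = M * exp (w • N) * exp (-(w • N)) := by
              rw [mul_assoc, exp_mul_exp_neg, mul_one]
        _ = exp (w • N') * M * exp (-(w • N)) := by rw [this]
    have hcomm' : Commute (z • (-star N')) (w • N') := by
      apply Commute.smul_left
      apply Commute.smul_right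
      exact (Commute.neg_left hN'.symm)
    have hcomm : Commute (-(w • N)) (z • star N) := by
      apply Commute.neg_left
      apply Commute.smul_left
      apply Commute.smul_right
      exact hN
    have hGz : G z = exp (z • (-star N') + w • N') * M * exp (-(w • N) + z • star N) := by
      rw [exp_add_of_commute hcomm', exp_add_of_commute hcomm]
      calc G z = exp (z • (-star N')) * (exp (w • N') * M * exp (-(w • N)))
            * exp (z • star N) := by rw [← hMrw]
        _ = _ := by noncomm_ring
    have hu1 : exp (z • (-star N') + w • N') ∈ unitary A := by
      apply exp_skew_unitary
      simp only [star_add, star_smul, star_neg, star_star, smul_neg, hw,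
        Complex.star_def, Complex.conj_conj]
      abel
    have hu2 : exp (-(w • N) + z • star N) ∈ unitary A := by
      apply exp_skew_unitary
      simp only [star_add, star_smul, star_neg, star_star, smul_neg, hw,
        Complex.star_def, Complex.conj_conj]
      abel
    calc ‖G z‖ = ‖exp (z • (-star N') + w • N') *
          (M * exp (-(w • N) + z • star N))‖ := by rw [hGz, mul_assoc]
      _ = ‖M * exp (-(w • N) + z • star N)‖ := CStarRing.norm_mem_unitary_mul _ hu1
      _ = ‖M‖ := CStarRing.norm_mul_mem_unitary _ hu2
      _ ≤ ‖M‖ := le_rfl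
  have hb' : Bornology.IsBounded (Set.range G) := by
    rw [isBounded_iff_forall_norm_le]
    exact ⟨‖M‖, by rintro x ⟨z, rfl⟩; exact hbnd z⟩
  have hconst : ∀ z : ℂ, G z = M := by
    intro z
    have h0 : G z = G 0 := hdiff.apply_eq_apply_of_bounded hb' z 0
    rw [h0]
    simp [hG]
  have hM2 : ∀ z : ℂ, M * exp (z • star N) = exp (z • star N') * M := by
    intro z
    have h0 := hconst z
    simp only [hG] at h0
    have hinv : exp (z • star N') * exp (z • (-star N')) = 1 := by
      rw [smul_neg, exp_mul_exp_neg]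
    calc M * exp (z • star N)
        = (exp (z • star N') * exp (z • (-star N'))) * M * exp (z • star N) := by
          rw [hinv, one_mul]
      _ = exp (z • star N') * (exp (z • (-star N')) * M * exp (z • star N)) := by
          noncomm_ring
      _ = exp (z • star N') * M := by rw [h0]
  have hL : HasDerivAt (fun z : ℂ => M * exp (z • star N)) (M * star N) 0 := by
    have := (hasDerivAt_exp_smul_const (𝕂 := ℂ) (star N) 0).const_mul M
    simpa using this
  have hRd : HasDerivAt (fun z : ℂ => exp (z • star N') * M) (star N' * M) 0 := by
    have := (hasDerivAt_exp_smul_const' (𝕂 := ℂ) (star N') 0).mul_const M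
    simpa using this
  have heq : (fun z : ℂ => M * exp (z • star N)) =
      fun z : ℂ => exp (z • star N') * M := funext hM2
  exact hL.unique (heq ▸ hRd)

end FP

/-- A complex matrix is positive definite Hermitian. -/
def PosDefHermitian {n : ℕ} (P : Matrix (Fin n) (Fin n) ℂ) : Prop :=
  P.IsHermitian ∧ ∀ x : Fin n → ℂ, x ≠ 0 →
    0 < (dotProduct (star x) (P.mulVec x)).re

private lemma pdh_isUnit {n : ℕ} {R : Matrix (Fin n) (Fin n) ℂ}
    (hR : PosDefHermitian R) : IsUnit R := by
  rw [← Matrix.mulVec_injective_iff_isUnit]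
  intro x y hxy
  by_contra hne
  have hsub : R.mulVec (x - y) = 0 := by
    rw [Matrix.mulVec_sub, hxy, sub_self]
  have hxy0 : x - y ≠ 0 := sub_ne_zero.mpr hne
  have := hR.2 (x - y) hxy0
  rw [hsub, dotProduct_zero] at this
  simp at this

theorem stmt_17 {n : ℕ} (X N N' R R' : Matrix (Fin n) (Fin n) ℂ)
    (hdiag : ∃ P D : Matrix (Fin n) (Fin n) ℂ,
      IsUnit P ∧ D.IsDiag ∧ X = P * D * P⁻¹)
    (hN : N * N.conjTranspose = N.conjTranspose * N)
    (hN' : N' * N'.conjTranspose = N'.conjTranspose * N')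
    (hR : PosDefHermitian R) (hR' : PosDefHermitian R')
    (h1 : X = R * N * R⁻¹) (h2 : X = R' * N' * R'⁻¹) :
    R⁻¹ * N * R = R'⁻¹ * N' * R' := by
  have hRu : IsUnit R := pdh_isUnit hR
  have hRu' : IsUnit R' := pdh_isUnit hR'
  have hRd : IsUnit R.det := (Matrix.isUnit_iff_isUnit_det R).mp hRu
  have hRd' : IsUnit R'.det := (Matrix.isUnit_iff_isUnit_det R').mp hRu'
  have hinvR : R⁻¹ * R = 1 := Matrix.nonsing_inv_mul R hRd
  have hinvR2 : R * R⁻¹ = 1 := Matrix.mul_nonsing_inv R hRd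
  have hinvR' : R'⁻¹ * R' = 1 := Matrix.nonsing_inv_mul R' hRd'
  have hinvR2' : R' * R'⁻¹ = 1 := Matrix.mul_nonsing_inv R' hRd'
  -- intertwining relation
  have hM : (R'⁻¹ * R) * N = N' * (R'⁻¹ * R) := by
    have h3 : R * N * R⁻¹ = R' * N' * R'⁻¹ := h1 ▸ h2
    have h4 : R * N = R' * N' * (R'⁻¹ * R) := by
      rw [← mul_assoc, ← h3, mul_assoc, hinvR, mul_one]
    calc (R'⁻¹ * R) * N = R'⁻¹ * (R * N) := by rw [mul_assoc]
      _ = R'⁻¹ * (R' * N' * (R'⁻¹ * R)) := by rw [h4]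
      _ = N' * (R'⁻¹ * R) := by
          simp only [← mul_assoc]
          rw [hinvR', one_mul]
  have key := fuglede_putnam (R'⁻¹ * R) N N' hN hN' hM
  -- star = conjTranspose on matrices, so key : (R'⁻¹R) Nᴴ = N'ᴴ (R'⁻¹R)
  rw [Matrix.star_eq_conjTranspose, Matrix.star_eq_conjTranspose] at key
  have key' : R * N.conjTranspose * R⁻¹ = R' * N'.conjTranspose * R'⁻¹ := by
    have h5 : R' * (R'⁻¹ * R * N.conjTranspose) * R⁻¹
        = R' * (N'.conjTranspose * (R'⁻¹ * R)) * R⁻¹ := by rw [key]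
    simp only [← mul_assoc] at h5
    rw [hinvR2', one_mul] at h5
    rw [mul_assoc _ R R⁻¹, hinvR2, mul_one] at h5
    exact h5
  -- take conjTranspose of key'
  have final := congrArg Matrix.conjTranspose key'
  simp only [Matrix.conjTranspose_mul, Matrix.conjTranspose_conjTranspose,
    Matrix.conjTranspose_nonsing_inv, hR.1.eq, hR'.1.eq] at final
  simp only [← mul_assoc] at final
  exact final
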